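/- Suppose the UN one-step map f is a k-equilibrium continuous-time dynamics with equilibria π^e_1 < … < π^e_k and delimiters δ_1, …, δ_{k−1}, and suppose L_AA1 := max over π ∈ [0,1] of |f₁(0,π) − f₀(0,π)| satisfies L_AA1 < 1. Let π_A, π_B : [0,∞) → [0,1] be differentiable solutions of the joint AA1 continuous-time dynamics dπ_A/dt = F_A(π_A, π_B) − π_A, dπ_B/dt = F_B(π_A, π_B) − π_B with π_A(0) ≥ π_B(0), π_A(t) ≥ π_B(t) for all t, π_A(0) ∈ (δ_{j−1}, δ_j) and π_B(0) ∈ (δ_{i−1}, δ_i) with i ≤ j. Then π_B(t) → π^e_i and π_A(t) → π^e_i as t → ∞; in particular, for any g_A ∈ (0,1) and u₁ ≥ 0, the limiting per-step utility u₁·π^e_i of the equalized population is no larger than the limiting UN utility u₁·(g_A·π^e_j + (1−g_A)·π^e_i). -/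
import Mathlib


open Filter Set Topology

set_option maxHeartbeats 800000

/-- Theorem: AA1 equalizes to the lower equilibrium in continuous time.
Indexing is 0-based: the UN map `f(π) = π·f₁(0,π) + (1−π)·f₀(0,π)` is a k-equilibrium
continuous-time dynamics with equilibria `πe 0 < … < πe (k−1)` and delimiters `δ 0 = 0`,
`δ i ∈ (πe (i−1), πe i)`, `δ k = 1`. If `L_AA1 := max_π |f₁(0,π) − f₀(0,π)| < 1`, and
`π_A, π_B` solve the joint AA1 continuous-time dynamics with `π_A` always advantaged,
`π_A(0)` in basin `j` and `π_B(0)` in basin `i`, `i ≤ j`, then both groups converge to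
`πe i`; in particular the limiting per-step utility of the equalized population is no
larger than the limiting UN utility. -/
theorem AA1_CT_k_equilibrium_worse_equilibrium
    (f₀ f₁ : ℝ → ℝ → ℝ)
    (hmap0 : ∀ x ∈ Set.Icc (0:ℝ) 1, ∀ y ∈ Set.Icc (0:ℝ) 1, f₀ x y ∈ Set.Icc (0:ℝ) 1)
    (hmap1 : ∀ x ∈ Set.Icc (0:ℝ) 1, ∀ y ∈ Set.Icc (0:ℝ) 1, f₁ x y ∈ Set.Icc (0:ℝ) 1)
    (f : ℝ → ℝ) (hf : ∀ π, f π = π * f₁ 0 π + (1 - π) * f₀ 0 π)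
    (k : ℕ) (hk : 0 < k) (πe : ℕ → ℝ) (δ : ℕ → ℝ)
    (hπe_mem : ∀ i < k, πe i ∈ Set.Icc (0:ℝ) 1)
    (hπe_mono : ∀ i, i + 1 < k → πe i < πe (i + 1))
    (hδ0 : δ 0 = 0) (hδk : δ k = 1)
    (hδ : ∀ i, 0 < i → i < k → πe (i - 1) < δ i ∧ δ i < πe i)
    -- f is a k-equilibrium continuous-time dynamics
    (hkeq : ∀ i < k, ∀ x : ℝ → ℝ,
        (∀ t : ℝ, 0 ≤ t → x t ∈ Set.Icc (0:ℝ) 1) →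
        (∀ t : ℝ, 0 ≤ t → HasDerivWithinAt x (f (x t) - x t) (Set.Ici 0) t) →
        ((δ i < x 0 ∧ x 0 < δ (i + 1)) ∨ (i = 0 ∧ x 0 = 0) ∨ (i = k - 1 ∧ x 0 = 1)) →
        Filter.Tendsto x Filter.atTop (nhds (πe i)))
    -- the AA1 equalizing condition L_AA1 < 1
    (LAA1 : ℝ) (hLAA1 : ∀ π ∈ Set.Icc (0:ℝ) 1, |f₁ 0 π - f₀ 0 π| ≤ LAA1)
    (hLAA1lt : LAA1 < 1)
    -- AA1 one-step maps
    (FA FB : ℝ → ℝ → ℝ)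
    (hFA : ∀ π π', FA π π' = π * f₁ 0 π' + (1 - π) * f₀ 0 π')
    (hFB : ∀ π π', FB π π' = π' * f₁ 0 π' + (1 - π') * f₀ 0 π')
    -- joint AA1 continuous-time solutions with A advantaged throughout
    (πA πB : ℝ → ℝ)
    (hmemA : ∀ t : ℝ, 0 ≤ t → πA t ∈ Set.Icc (0:ℝ) 1)
    (hmemB : ∀ t : ℝ, 0 ≤ t → πB t ∈ Set.Icc (0:ℝ) 1)
    (hodeA : ∀ t : ℝ, 0 ≤ t →
        HasDerivWithinAt πA (FA (πA t) (πB t) - πA t) (Set.Ici 0) t)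
    (hodeB : ∀ t : ℝ, 0 ≤ t →
        HasDerivWithinAt πB (FB (πA t) (πB t) - πB t) (Set.Ici 0) t)
    (horder : ∀ t : ℝ, 0 ≤ t → πB t ≤ πA t)
    (i j : ℕ) (hij : i ≤ j) (hjk : j < k)
    (hA0 : (δ j < πA 0 ∧ πA 0 < δ (j + 1)) ∨ (j = 0 ∧ πA 0 = 0) ∨ (j = k - 1 ∧ πA 0 = 1))
    (hB0 : (δ i < πB 0 ∧ πB 0 < δ (i + 1)) ∨ (i = 0 ∧ πB 0 = 0) ∨ (i = k - 1 ∧ πB 0 = 1)) :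
    Filter.Tendsto πB Filter.atTop (nhds (πe i)) ∧
    Filter.Tendsto πA Filter.atTop (nhds (πe i)) ∧
    ∀ gA u₁ : ℝ, gA ∈ Set.Ioo (0:ℝ) 1 → 0 ≤ u₁ →
      u₁ * πe i ≤ u₁ * (gA * πe j + (1 - gA) * πe i) := by
  -- notation
  set ε : ℝ := 1 - LAA1 with hεdef
  have hε : 0 < ε := by simp [hεdef]; linarith
  -- πB is a solution of the unconstrained dynamics
  have hBode : ∀ t : ℝ, 0 ≤ t → HasDerivWithinAt πB (f (πB t) - πB t) (Set.Ici 0) t := by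
    intro t ht
    have h := hodeB t ht
    rwa [hFB, ← hf] at h
  have hik : i < k := lt_of_le_of_lt hij hjk
  have hBtend : Filter.Tendsto πB Filter.atTop (nhds (πe i)) :=
    hkeq i hik πB hmemB hBode hB0
  -- the gap g := πA - πB satisfies g' = g * (c - 1)
  have hg' : ∀ t : ℝ, 0 ≤ t → HasDerivWithinAt (fun s => πA s - πB s)
      ((πA t - πB t) * ((f₁ 0 (πB t) - f₀ 0 (πB t)) - 1)) (Set.Ici 0) t := by
    intro t ht
    have h := (hodeA t ht).sub (hodeB t ht)
    have heq : FA (πA t) (πB t) - πA t - (FB (πA t) (πB t) - πB t)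
        = (πA t - πB t) * ((f₁ 0 (πB t) - f₀ 0 (πB t)) - 1) := by
      rw [hFA, hFB]; ring
    rwa [heq] at h
  -- exponential decay of the gap
  have hexp' : ∀ t : ℝ, HasDerivAt (fun s => Real.exp (ε * s)) (ε * Real.exp (ε * t)) t := by
    intro t
    have h1 : HasDerivAt (fun s : ℝ => ε * s) ε t := by
      simpa using (hasDerivAt_id t).const_mul ε
    have h2 := h1.exp
    simpa [mul_comm] using h2
  have hcontA : ContinuousOn πA (Set.Ici 0) := fun t ht => (hodeA t ht).continuousWithinAt
  have hcontB : ContinuousOn πB (Set.Ici 0) := fun t ht => (hodeB t ht).continuousWithinAt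
  have hanti : AntitoneOn (fun s => (πA s - πB s) * Real.exp (ε * s)) (Set.Ici 0) := by
    apply antitoneOn_of_hasDerivWithinAt_nonpos (convex_Ici 0)
      (f' := fun t => ((πA t - πB t) * ((f₁ 0 (πB t) - f₀ 0 (πB t)) - 1)) * Real.exp (ε * t)
        + (πA t - πB t) * (ε * Real.exp (ε * t)))
    · exact (hcontA.sub hcontB).mul (Real.continuous_exp.comp (continuous_const.mul continuous_id)).continuousOn
    · intro t ht
      rw [interior_Ici] at ht ⊢
      have ht' : (0:ℝ) ≤ t := le_of_lt ht
      exact ((hg' t ht').mul ((hexp' t).hasDerivWithinAt)).mono Set.Ioi_subset_Ici_self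
    · intro t ht
      rw [interior_Ici] at ht
      have ht' : (0:ℝ) ≤ t := le_of_lt ht
      have hgnn : 0 ≤ πA t - πB t := sub_nonneg.mpr (horder t ht')
      have hc : f₁ 0 (πB t) - f₀ 0 (πB t) ≤ LAA1 :=
        le_of_abs_le (hLAA1 (πB t) (hmemB t ht'))
      have hfac : (f₁ 0 (πB t) - f₀ 0 (πB t)) - 1 + ε ≤ 0 := by
        simp only [hεdef]; linarith
      have key : ((πA t - πB t) * ((f₁ 0 (πB t) - f₀ 0 (πB t)) - 1)) * Real.exp (ε * t)
          + (πA t - πB t) * (ε * Real.exp (ε * t))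
          = ((πA t - πB t) * ((f₁ 0 (πB t) - f₀ 0 (πB t)) - 1 + ε)) * Real.exp (ε * t) := by
        ring
      rw [key]
      exact mul_nonpos_of_nonpos_of_nonneg
        (mul_nonpos_of_nonneg_of_nonpos hgnn hfac) (Real.exp_pos _).le
  -- the gap tends to 0
  have hbound : ∀ t : ℝ, 0 ≤ t → πA t - πB t ≤ (πA 0 - πB 0) * Real.exp (-(ε * t)) := by
    intro t ht
    have h := hanti (Set.self_mem_Ici) ht ht
    simp only [mul_zero, Real.exp_zero, mul_one] at h
    have hpos := Real.exp_pos (ε * t)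
    rw [Real.exp_neg, ← div_eq_mul_inv, le_div_iff₀ hpos]
    exact h
  have hdecay : Filter.Tendsto (fun t => (πA 0 - πB 0) * Real.exp (-(ε * t)))
      Filter.atTop (nhds 0) := by
    have h1 : Filter.Tendsto (fun t : ℝ => -(ε * t)) Filter.atTop Filter.atBot := by
      apply Filter.tendsto_neg_atTop_atBot.comp
      exact Filter.Tendsto.const_mul_atTop hε Filter.tendsto_id
    have h2 : Filter.Tendsto (fun t : ℝ => Real.exp (-(ε * t))) Filter.atTop (nhds 0) :=
      Real.tendsto_exp_atBot.comp h1
    simpa using h2.const_mul (πA 0 - πB 0)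
  have hgap : Filter.Tendsto (fun t => πA t - πB t) Filter.atTop (nhds 0) := by
    apply squeeze_zero' (g := fun t => (πA 0 - πB 0) * Real.exp (-(ε * t)))
      ?_ ?_ hdecay
    · filter_upwards [Filter.eventually_ge_atTop (0:ℝ)] with t ht
      exact sub_nonneg.mpr (horder t ht)
    · filter_upwards [Filter.eventually_ge_atTop (0:ℝ)] with t ht
      exact hbound t ht
  have hAtend : Filter.Tendsto πA Filter.atTop (nhds (πe i)) := by
    have h := hBtend.add hgap
    simp only [add_zero] at h
    convert h using 2 with t
    ring
  -- monotonicity of the equilibria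
  have hmono : ∀ m n : ℕ, m ≤ n → n < k → πe m ≤ πe n := by
    intro m n hmn hnk
    induction n with
    | zero => simp_all
    | succ n ih =>
      rcases Nat.lt_or_ge m (n+1) with h | h
      · have h1 : πe m ≤ πe n := ih (Nat.lt_succ_iff.mp h) (Nat.lt_of_succ_lt hnk)
        exact h1.trans (hπe_mono n hnk).le
      · have : m = n + 1 := le_antisymm hmn h
        simp [this]
  refine ⟨hBtend, hAtend, ?_⟩
  intro gA u₁ hgA hu₁
  have hij' : πe i ≤ πe j := hmono i j hij hjk
  have := hgA.1
  nlinarith [mul_nonneg hu₁ (le_of_lt hgA.1)]
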